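/- arXiv:1901.01742 — 5 statements merged into one kernel-verified Lean document; each statement's English description precedes it below -/
import Mathlib

section
/- Let Γ be a nonempty subset of a real normed vector space, let z be a point, and let x* ∈ Γ be a closest point of z in Γ, i.e. ‖z − x*‖ ≤ ‖z − w‖ for all w ∈ Γ. Then for every t ∈ [0,1], the point y_t = x* + t·(z − x*) on the segment from x* to z also has x* as a closest point in Γ; moreover ‖y_t − x*‖ = t·‖z − x*‖, so the distance from y_t to Γ equals t times the distance from z to Γ. -/
/-- If `x*` is a closest point of `z` in `Γ`, then every point
`y_t = x* + t • (z - x*)` on the segment from `x*` to `z` also has `x*` as a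
closest point in `Γ`; moreover `‖y_t - x*‖ = t * ‖z - x*‖`, so the distance
from `y_t` to `Γ` is `t` times the distance from `z` to `Γ`. -/
theorem closest_point_along_segment
    {E : Type*} [NormedAddCommGroup E] [NormedSpace ℝ E]
    (Γ : Set E) (hΓ : Γ.Nonempty) (z xstar : E) (hx : xstar ∈ Γ)
    (hclosest : ∀ w ∈ Γ, ‖z - xstar‖ ≤ ‖z - w‖)
    (t : ℝ) (ht : t ∈ Set.Icc (0 : ℝ) 1) :
    (∀ w ∈ Γ, ‖(xstar + t • (z - xstar)) - xstar‖ ≤ ‖(xstar + t • (z - xstar)) - w‖) ∧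
    ‖(xstar + t • (z - xstar)) - xstar‖ = t * ‖z - xstar‖ ∧
    Metric.infDist (xstar + t • (z - xstar)) Γ = t * Metric.infDist z Γ := by
  obtain ⟨ht0, ht1⟩ := ht
  set y := xstar + t • (z - xstar) with hy
  have hnorm : ‖y - xstar‖ = t * ‖z - xstar‖ := by
    simp [hy, norm_smul, abs_of_nonneg ht0]
  have hzy : ‖z - y‖ = (1 - t) * ‖z - xstar‖ := by
    have : z - y = (1 - t) • (z - xstar) := by
      simp [hy, sub_smul, one_smul]; abel
    rw [this, norm_smul, Real.norm_eq_abs, abs_of_nonneg (by linarith)]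
  have key : ∀ w ∈ Γ, ‖y - xstar‖ ≤ ‖y - w‖ := by
    intro w hw
    have h1 : ‖z - w‖ ≤ ‖z - y‖ + ‖y - w‖ := by
      calc ‖z - w‖ = ‖(z - y) + (y - w)‖ := by abel_nf
        _ ≤ ‖z - y‖ + ‖y - w‖ := norm_add_le _ _
    have h2 := hclosest w hw
    rw [hnorm]
    rw [hzy] at h1
    nlinarith [norm_nonneg (z - xstar)]
  refine ⟨key, hnorm, ?_⟩
  have hinfz : Metric.infDist z Γ = ‖z - xstar‖ := by
    apply le_antisymm
    · simpa [dist_eq_norm] using Metric.infDist_le_dist_of_mem hx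
    · by_contra h
      push_neg at h
      obtain ⟨w, hw, hd⟩ := (Metric.infDist_lt_iff hΓ).1 h
      rw [dist_eq_norm] at hd
      exact absurd (hclosest w hw) (not_le.2 hd)
  have hinfy : Metric.infDist y Γ = ‖y - xstar‖ := by
    apply le_antisymm
    · simpa [dist_eq_norm] using Metric.infDist_le_dist_of_mem hx
    · by_contra h
      push_neg at h
      obtain ⟨w, hw, hd⟩ := (Metric.infDist_lt_iff hΓ).1 h
      rw [dist_eq_norm] at hd
      exact absurd (key w hw) (not_le.2 hd)
  rw [hinfy, hinfz, hnorm]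
end

section
/- Let Γ be a nonempty subset of a real normed vector space, let z be a point, and suppose x* ∈ Γ is the unique closest point of z in Γ, i.e. ‖z − x*‖ ≤ ‖z − w‖ for all w ∈ Γ, and any w ∈ Γ with ‖z − w‖ = ‖z − x*‖ equals x*. Then for every t ∈ [0,1], x* is the unique closest point in Γ of the point y_t = x* + t·(z − x*). Consequently, for any function u : Γ → ℝ, the constant-along-normal extension ũ(y) = u(closest point of y) is constant and equal to u(x*) along the whole segment from x* to z. -/
/-- If `x*` is the *unique* closest point of `z` in `Γ`, then for every
`t ∈ [0,1]`, `x*` is the unique closest point of `y_t = x* + t • (z - x*)`;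
consequently the constant-along-normal extension `ũ = u ∘ cp` is constant
(equal to `u x*`) along the whole segment from `x*` to `z`. -/
theorem unique_closest_point_along_segment
    {E : Type*} [NormedAddCommGroup E] [NormedSpace ℝ E]
    (Γ : Set E) (hΓ : Γ.Nonempty) (z xstar : E) (hx : xstar ∈ Γ)
    (hclosest : ∀ w ∈ Γ, ‖z - xstar‖ ≤ ‖z - w‖)
    (huniq : ∀ w ∈ Γ, ‖z - w‖ = ‖z - xstar‖ → w = xstar)
    (t : ℝ) (ht : t ∈ Set.Icc (0 : ℝ) 1) :
    ((∀ w ∈ Γ, ‖(xstar + t • (z - xstar)) - xstar‖ ≤ ‖(xstar + t • (z - xstar)) - w‖) ∧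
      (∀ w ∈ Γ, ‖(xstar + t • (z - xstar)) - w‖ = ‖(xstar + t • (z - xstar)) - xstar‖ →
        w = xstar)) ∧
    ∀ (u : E → ℝ) (cp : E → E),
      (cp (xstar + t • (z - xstar)) ∈ Γ ∧
        ∀ w ∈ Γ, ‖(xstar + t • (z - xstar)) - cp (xstar + t • (z - xstar))‖ ≤
          ‖(xstar + t • (z - xstar)) - w‖) →
      u (cp (xstar + t • (z - xstar))) = u xstar := by
  obtain ⟨ht0, ht1⟩ := ht
  set y := xstar + t • (z - xstar) with hy
  have hyx : ‖y - xstar‖ = t * ‖z - xstar‖ := by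
    have : y - xstar = t • (z - xstar) := by simp [hy]
    rw [this, norm_smul, Real.norm_eq_abs, abs_of_nonneg ht0]
  have hzy : ‖z - y‖ = (1 - t) * ‖z - xstar‖ := by
    have : z - y = (1 - t) • (z - xstar) := by
      simp [hy, sub_smul, one_smul]; abel
    rw [this, norm_smul, Real.norm_eq_abs, abs_of_nonneg (by linarith)]
  have tri : ∀ w : E, ‖z - w‖ ≤ ‖z - y‖ + ‖y - w‖ := fun w =>
    norm_sub_le_norm_sub_add_norm_sub z y w
  have key : ∀ w ∈ Γ, ‖y - xstar‖ ≤ ‖y - w‖ := by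
    intro w hw
    have h1 := hclosest w hw
    have h2 := tri w
    rw [hyx]
    nlinarith [norm_nonneg (z - xstar), hzy]
  refine ⟨⟨key, ?_⟩, ?_⟩
  · intro w hw heq
    apply huniq w hw
    have h2 := tri w
    have h1 := hclosest w hw
    rw [heq, hyx, hzy] at h2
    linarith
  · intro u cp ⟨hcpΓ, hcp⟩
    have h1 := hcp xstar hx
    have h2 := key _ hcpΓ
    have : ‖y - cp y‖ = ‖y - xstar‖ := le_antisymm h1 h2
    have h3 := tri (cp y)
    have h4 := hclosest _ hcpΓ
    rw [this, hyx, hzy] at h3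
    have := huniq _ hcpΓ (le_antisymm (by linarith) h4)
    rw [this]
end

section
/- (Principle 2, hypersurface form.) Let d : ℝ^d → ℝ be twice continuously differentiable on a neighborhood U of a point x with ‖∇d(y)‖ = 1 for all y ∈ U, and set n = ∇d(x). Let w : ℝ^d → ℝ^d be differentiable at x and tangent to all level sets of d near x, i.e. ⟨w(y), ∇d(y)⟩ = 0 for all y ∈ U. Then ⟨(Dw(x))(n), n⟩ = 0; consequently the standard divergence of w at x equals the surface divergence, ∇·w(x) = ∇·w(x) − ⟨(Dw(x))(n), n⟩. -/
open RealInnerProductSpace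

/-- Principle 2 (hypersurface form): if `d` is `C²` with `‖∇d‖ = 1` near `x`,
`n = ∇d(x)`, and the vector field `w` is tangent to all level sets of `d` near
`x`, then `⟪(Dw(x)) n, n⟫ = 0`; consequently the standard divergence of `w`
at `x` (the trace of its Jacobian) equals the surface divergence
`∇·w − ⟪(Dw) n, n⟫`. -/
theorem principle_two_divergence
    (d : ℕ) (dist : EuclideanSpace ℝ (Fin d) → ℝ)
    (x : EuclideanSpace ℝ (Fin d))
    (U : Set (EuclideanSpace ℝ (Fin d))) (hU : IsOpen U) (hxU : x ∈ U)
    (hd : ContDiffOn ℝ 2 dist U)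
    (heik : ∀ y ∈ U, ‖gradient dist y‖ = 1)
    (w : EuclideanSpace ℝ (Fin d) → EuclideanSpace ℝ (Fin d))
    (hw : DifferentiableAt ℝ w x)
    (htang : ∀ y ∈ U, ⟪w y, gradient dist y⟫ = 0) :
    ⟪(fderiv ℝ w x) (gradient dist x), gradient dist x⟫ = 0 ∧
      LinearMap.trace ℝ (EuclideanSpace ℝ (Fin d))
          (fderiv ℝ w x : EuclideanSpace ℝ (Fin d) →ₗ[ℝ] EuclideanSpace ℝ (Fin d)) =
        LinearMap.trace ℝ (EuclideanSpace ℝ (Fin d))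
            (fderiv ℝ w x : EuclideanSpace ℝ (Fin d) →ₗ[ℝ] EuclideanSpace ℝ (Fin d)) -
          ⟪(fderiv ℝ w x) (gradient dist x), gradient dist x⟫ := by
  have hnx : U ∈ nhds x := hU.mem_nhds hxU
  -- fderiv of dist is C¹ on U, hence differentiable at x
  have hf'C : ContDiffOn ℝ 1 (fderiv ℝ dist) U := hd.fderiv_of_isOpen (m := 1) hU (by norm_num)
  have hf'diff : DifferentiableAt ℝ (fderiv ℝ dist) x :=
    (hf'C.differentiableOn one_ne_zero).differentiableAt hnx
  set F'' := fderiv ℝ (fderiv ℝ dist) x with hF''def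
  set L : StrongDual ℝ (EuclideanSpace ℝ (Fin d)) →L[ℝ] EuclideanSpace ℝ (Fin d) :=
    ((InnerProductSpace.toDual ℝ (EuclideanSpace ℝ (Fin d))).symm.toContinuousLinearEquiv :
      StrongDual ℝ (EuclideanSpace ℝ (Fin d)) ≃L[ℝ] EuclideanSpace ℝ (Fin d)).toContinuousLinearMap with hLdef
  have hgFD : HasFDerivAt (gradient dist) (L.comp F'') x := by
    have := L.hasFDerivAt.comp x hf'diff.hasFDerivAt
    exact this
  have hgdiff : DifferentiableAt ℝ (gradient dist) x := hgFD.differentiableAt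
  have hDg : ∀ v : EuclideanSpace ℝ (Fin d), fderiv ℝ (gradient dist) x v
      = (InnerProductSpace.toDual ℝ (EuclideanSpace ℝ (Fin d))).symm (F'' v) := by
    intro v; rw [hgFD.fderiv]; rfl
  have hDg_inner : ∀ v u : EuclideanSpace ℝ (Fin d), ⟪fderiv ℝ (gradient dist) x v, u⟫ = F'' v u := by
    intro v u; rw [hDg v, InnerProductSpace.toDual_symm_apply]
  -- symmetry of second derivative
  have hsymm : ∀ u v : EuclideanSpace ℝ (Fin d), F'' u v = F'' v u := by
    intro u v
    exact ((hd.contDiffAt hnx).isSymmSndFDerivAt (by simp)).eq u v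
  -- eikonal: derivative of ⟪g y, g y⟫ is 0
  have heik0 : ∀ v : EuclideanSpace ℝ (Fin d), ⟪fderiv ℝ (gradient dist) x v, gradient dist x⟫ = 0 := by
    intro v
    have hfz : fderiv ℝ (fun y => ⟪gradient dist y, gradient dist y⟫) x = 0 := by
      have hEq : (fun y => ⟪gradient dist y, gradient dist y⟫) =ᶠ[nhds x]
          (fun _ => (1 : ℝ)) := by
        filter_upwards [hnx] with y hy
        rw [real_inner_self_eq_norm_sq, heik y hy]; norm_num
      rw [hEq.fderiv_eq, fderiv_fun_const]; rfl
    have h := fderiv_inner_apply ℝ hgdiff hgdiff v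
    rw [hfz] at h
    simp only [ContinuousLinearMap.zero_apply] at h
    have hc : (inner ℝ (gradient dist x) ((fderiv ℝ (gradient dist) x) v) : ℝ)
        = inner ℝ ((fderiv ℝ (gradient dist) x) v) (gradient dist x) := real_inner_comm _ _
    rw [hc] at h
    linarith
  -- tangency: derivative of ⟪w y, g y⟫ is 0
  have htan0 : fderiv ℝ (fun y => ⟪w y, gradient dist y⟫) x = 0 := by
    have hEq : (fun y => ⟪w y, gradient dist y⟫) =ᶠ[nhds x] (fun _ => (0 : ℝ)) := by
      filter_upwards [hnx] with y hy
      exact htang y hy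
    rw [hEq.fderiv_eq, fderiv_fun_const]; rfl
  have key : ⟪(fderiv ℝ w x) (gradient dist x), gradient dist x⟫ = 0 := by
    have h := fderiv_inner_apply ℝ hw hgdiff (gradient dist x)
    rw [htan0] at h
    simp only [ContinuousLinearMap.zero_apply] at h
    have hwterm : ⟪w x, fderiv ℝ (gradient dist) x (gradient dist x)⟫ = 0 := by
      rw [real_inner_comm, hDg_inner, hsymm]
      rw [← hDg_inner]
      exact heik0 (w x)
    linarith
  exact ⟨key, by rw [key]; ring⟩
end

section
/- Let n ∈ ℕ and let D, N, E be real n×n matrices such that: D is diagonal with D_{ii} ≤ 0 for all i; N has nonnegative entries, zero diagonal, and row sums Σ_j N_{ij} = −D_{ii} for every i; and E has nonnegative entries with row sums Σ_j E_{ij} ≤ 1 for every i. Then every (complex) eigenvalue λ of the matrix M = D + N·E satisfies Re λ ≤ 0. -/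
open Matrix

/-- Stability of the implicit closest point matrix `M = D + N·E`: if `D` is
diagonal with nonpositive diagonal, `N` is nonnegative with zero diagonal and
row sums `−D_{ii}`, and `E` is nonnegative with row sums at most `1`, then
every complex eigenvalue of `M` has nonpositive real part. -/
theorem implicit_cpm_eigenvalues_left_half_plane
    (n : ℕ) (D N E : Matrix (Fin n) (Fin n) ℝ)
    (hD_diag : D.IsDiag) (hD_nonpos : ∀ i, D i i ≤ 0)
    (hN_nonneg : ∀ i j, 0 ≤ N i j) (hN_diag : ∀ i, N i i = 0)
    (hN_rowsum : ∀ i, ∑ j, N i j = -(D i i))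
    (hE_nonneg : ∀ i j, 0 ≤ E i j) (hE_rowsum : ∀ i, ∑ j, E i j ≤ 1)
    (μ : ℂ) (hμ : μ ∈ spectrum ℂ ((D + N * E).map (algebraMap ℝ ℂ))) :
    μ.re ≤ 0 := by
  set M := D + N * E with hM
  set A := M.map (algebraMap ℝ ℂ) with hA
  -- transfer to an eigenvalue of the linear map
  have h1 : Module.End.HasEigenvalue (Matrix.toLin' A) μ := by
    rw [Module.End.hasEigenvalue_iff_mem_spectrum]
    have : Matrix.toLin' A = Matrix.toLinAlgEquiv' A := rfl
    rw [this, AlgEquiv.spectrum_eq]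
    exact hμ
  obtain ⟨k, hk⟩ := eigenvalue_mem_ball h1
  rw [Metric.mem_closedBall] at hk
  -- nonnegativity of N*E entries
  have hNE : ∀ i j, 0 ≤ (N * E) i j := by
    intro i j
    rw [Matrix.mul_apply]
    exact Finset.sum_nonneg fun l _ => mul_nonneg (hN_nonneg i l) (hE_nonneg l j)
  -- row sums of N*E bounded by -D i i
  have hNEsum : ∀ i, ∑ j, (N * E) i j ≤ -(D i i) := by
    intro i
    calc ∑ j, (N * E) i j = ∑ l, N i l * ∑ j, E l j := by
          simp only [Matrix.mul_apply, Finset.mul_sum]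
          rw [Finset.sum_comm]
      _ ≤ ∑ l, N i l * 1 := by
          refine Finset.sum_le_sum fun l _ => ?_
          exact mul_le_mul_of_nonneg_left (hE_rowsum l) (hN_nonneg i l)
      _ = -(D i i) := by simpa using hN_rowsum i
  -- entries of A
  have hAkj : ∀ j, A k j = (M k j : ℂ) := fun j => rfl
  have hre : μ.re - M k k ≤ ‖μ - A k k‖ := by
    have : μ.re - M k k = (μ - A k k).re := by
      simp [hAkj k]
    rw [this]
    exact (Complex.re_le_norm _).trans (le_refl _)
  have hnorm : ∀ j, ‖A k j‖ = |M k j| := by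
    intro j
    rw [hAkj j]
    simp [Complex.norm_real]
  have hoffdiag : ∀ j, j ≠ k → M k j = (N * E) k j := by
    intro j hj
    simp [hM, Matrix.add_apply, hD_diag (Ne.symm hj)]
  have hrad : ∑ j ∈ Finset.univ.erase k, ‖A k j‖ ≤ ∑ j ∈ Finset.univ.erase k, (N * E) k j := by
    refine Finset.sum_le_sum fun j hj => ?_
    rw [hnorm j, hoffdiag j (Finset.ne_of_mem_erase hj)]
    exact le_of_eq (abs_of_nonneg (hNE k j))
  have hdiag : M k k = D k k + (N * E) k k := rfl
  have hsum : ∑ j ∈ Finset.univ.erase k, (N * E) k j = (∑ j, (N * E) k j) - (N * E) k k := by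
    rw [Finset.sum_erase_eq_sub (Finset.mem_univ k)]
  have hdist : dist μ (A k k) = ‖μ - A k k‖ := by
    simp [Complex.dist_eq]
  calc μ.re ≤ M k k + ‖μ - A k k‖ := by linarith
    _ ≤ M k k + ∑ j ∈ Finset.univ.erase k, ‖A k j‖ := by
        rw [← hdist]; linarith
    _ ≤ M k k + ∑ j ∈ Finset.univ.erase k, (N * E) k j := by linarith
    _ = D k k + ∑ j, (N * E) k j := by rw [hdiag, hsum]; ring
    _ ≤ 0 := by have := hNEsum k; linarith
end

section
/- In a real inner product space, let Γ be a nonempty set, z a point, and x* ∈ Γ the unique closest point of z in Γ. For t ∈ [0,1] set y_t = x* + t·(z − x*). Then any w ∈ Γ attaining the distance from y_t to Γ (i.e. with ‖y_t − w‖ ≤ ‖y_t − v‖ for all v ∈ Γ) also attains the distance from z to Γ, i.e. ‖z − w‖ = ‖z − x*‖, and hence w = x*. -/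
/-- In a real inner product space, if `x*` is the unique closest point of `z`
in `Γ` and `y_t = x* + t • (z − x*)` with `t ∈ [0,1]`, then any `w ∈ Γ`
attaining the distance from `y_t` to `Γ` also attains the distance from `z`
to `Γ`, i.e. `‖z − w‖ = ‖z − x*‖`, and hence `w = x*`. -/
theorem unique_closest_point_propagates
    {E : Type*} [NormedAddCommGroup E] [InnerProductSpace ℝ E]
    (Γ : Set E) (hΓ : Γ.Nonempty) (z xstar : E) (hx : xstar ∈ Γ)
    (hclosest : ∀ w ∈ Γ, ‖z - xstar‖ ≤ ‖z - w‖)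
    (huniq : ∀ w ∈ Γ, ‖z - w‖ = ‖z - xstar‖ → w = xstar)
    (t : ℝ) (ht : t ∈ Set.Icc (0 : ℝ) 1)
    (w : E) (hw : w ∈ Γ)
    (hwmin : ∀ v ∈ Γ, ‖(xstar + t • (z - xstar)) - w‖ ≤ ‖(xstar + t • (z - xstar)) - v‖) :
    ‖z - w‖ = ‖z - xstar‖ ∧ w = xstar := by
  obtain ⟨ht0, ht1⟩ := ht
  set y := xstar + t • (z - xstar) with hy
  have h1 : ‖y - xstar‖ = t * ‖z - xstar‖ := by
    have : y - xstar = t • (z - xstar) := by rw [hy]; abel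
    rw [this, norm_smul, Real.norm_eq_abs, abs_of_nonneg ht0]
  have h2 : ‖z - y‖ = (1 - t) * ‖z - xstar‖ := by
    have : z - y = (1 - t) • (z - xstar) := by rw [hy, sub_smul, one_smul]; abel
    rw [this, norm_smul, Real.norm_eq_abs, abs_of_nonneg (by linarith)]
  have htri : ‖z - w‖ ≤ ‖z - y‖ + ‖y - w‖ := by
    have := dist_triangle z y w
    simpa [dist_eq_norm] using this
  have hyw : ‖y - w‖ ≤ ‖y - xstar‖ := hwmin xstar hx
  have hle : ‖z - w‖ ≤ ‖z - xstar‖ := by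
    calc ‖z - w‖ ≤ ‖z - y‖ + ‖y - w‖ := htri
      _ ≤ (1 - t) * ‖z - xstar‖ + t * ‖z - xstar‖ := by rw [h2]; linarith [h1 ▸ hyw]
      _ = ‖z - xstar‖ := by ring
  have heq : ‖z - w‖ = ‖z - xstar‖ := le_antisymm hle (hclosest w hw)
  exact ⟨heq, huniq w hw heq⟩
end
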